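/- Let M be a finite multiset of real numbers in (0,1], let S be a sub-multiset of M, and let m be a natural number with sum(S) ≥ 2m. Define cover(N), for a finite multiset N of reals in (0,1], as the greatest number of pairwise disjoint sub-multisets of N each having total sum at least 1. Then cover(M) ≥ cover(M − S) + m; that is, removing items of total size at least 2m from a bin covering instance decreases the optimal number of covered bins by at least m. -/

import Mathlib

/-- `N` can cover `m` bins: there are `m` pairwise disjoint sub-multisets of `N`
(i.e. a multiset of `m` bins whose multiset sum is contained in `N`), each of
total sum at least `1`. -/
def Covers (N : Multiset ℝ) (m : ℕ) : Prop :=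
  ∃ P : Multiset (Multiset ℝ), P.card = m ∧ P.sum ≤ N ∧ ∀ B ∈ P, (1 : ℝ) ≤ B.sum

/-- The maximum number of unit bins coverable by pairwise disjoint sub-multisets of `N`. -/
noncomputable def cover (N : Multiset ℝ) : ℕ :=
  sSup {m | Covers N m}

lemma covers_card_le {N : Multiset ℝ} {m : ℕ} (h : Covers N m) : m ≤ N.card := by
  obtain ⟨P, hcard, hle, hsum⟩ := h
  have h1 : P.card ≤ (P.map Multiset.card).sum := by
    have : ∀ B ∈ P, 1 ≤ Multiset.card B := by
      intro B hB
      rcases B.empty_or_exists_mem with hB0 | ⟨x, hx⟩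
      · exfalso; have := hsum B hB; rw [hB0] at this; simp at this; linarith
      · exact Multiset.card_pos.2 (fun h0 => by simp [h0] at hx)
    calc P.card = (P.map (fun _ => 1)).sum := by simp
    _ ≤ (P.map Multiset.card).sum := Multiset.sum_map_le_sum_map _ _ this
  have h2 : (P.map Multiset.card).sum = Multiset.card P.sum :=
    (Multiset.card_join P).symm
  have h3 : Multiset.card P.sum ≤ N.card := Multiset.card_le_card hle
  omega

lemma covers_bdd (N : Multiset ℝ) : BddAbove {m | Covers N m} :=
  ⟨N.card, fun _ h => covers_card_le h⟩

/-- extract a bin of sum in [1,2] -/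
lemma extract_bin (S : Multiset ℝ) (hS : ∀ x ∈ S, 0 < x ∧ x ≤ 1) (h1 : (1 : ℝ) ≤ S.sum) :
    ∃ B ≤ S, (1 : ℝ) ≤ B.sum ∧ B.sum ≤ 2 := by
  induction S using Multiset.induction with
  | empty => simp at h1; linarith
  | cons a S' ih =>
    by_cases h : (1 : ℝ) ≤ S'.sum
    · obtain ⟨B, hB, h1, h2⟩ := ih (fun x hx => hS x (Multiset.mem_cons_of_mem hx)) h
      exact ⟨B, hB.trans (Multiset.le_cons_self _ _), h1, h2⟩
    · refine ⟨a ::ₘ S', le_rfl, h1, ?_⟩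
      have ha := hS a (Multiset.mem_cons_self _ _)
      rw [Multiset.sum_cons]
      linarith
      
lemma covers_of_sum (S : Multiset ℝ) (hS : ∀ x ∈ S, 0 < x ∧ x ≤ 1) (m : ℕ)
    (hsum : (2 * m : ℝ) ≤ S.sum) : Covers S m := by
  induction m generalizing S with
  | zero => exact ⟨0, by simp⟩
  | succ n ih =>
    have h1 : (1 : ℝ) ≤ S.sum := by push_cast at hsum; linarith
    obtain ⟨B, hB, hB1, hB2⟩ := extract_bin S hS h1
    have hsplit : B.sum + (S - B).sum = S.sum := by
      rw [← Multiset.sum_add, add_tsub_cancel_of_le hB]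
    have hrest : (2 * n : ℝ) ≤ (S - B).sum := by
      push_cast at hsum ⊢
      linarith
    obtain ⟨P, hcard, hle, hsumP⟩ := ih (S - B)
      (fun x hx => hS x (Multiset.mem_of_le (tsub_le_self) hx)) hrest
    refine ⟨B ::ₘ P, by simp [hcard], ?_, ?_⟩
    · rw [Multiset.sum_cons]
      calc B + P.sum ≤ B + (S - B) := add_le_add_right hle B
      _ = S := by rw [add_tsub_cancel_of_le hB]
    · intro C hC
      rcases Multiset.mem_cons.1 hC with h | h
      · exact h ▸ hB1
      · exact hsumP C h

theorem stmt_11 (M S : Multiset ℝ) (hM : ∀ x ∈ M, 0 < x ∧ x ≤ 1)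
    (hS : S ≤ M) (m : ℕ) (hsum : (2 * m : ℝ) ≤ S.sum) :
    cover (M - S) + m ≤ cover M := by
  have hMS : ∀ x ∈ M - S, 0 < x ∧ x ≤ 1 :=
    fun x hx => hM x (Multiset.mem_of_le (tsub_le_self) hx)
  have hne : Covers (M - S) 0 := ⟨0, by simp⟩
  have hmem : Covers (M - S) (cover (M - S)) :=
    Nat.sSup_mem (⟨0, hne⟩ : {m | Covers (M - S) m}.Nonempty) (covers_bdd (M - S))
  obtain ⟨P1, hc1, hl1, hs1⟩ := hmem
  have hSin : ∀ x ∈ S, 0 < x ∧ x ≤ 1 := fun x hx => hM x (Multiset.mem_of_le hS hx)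
  obtain ⟨P2, hc2, hl2, hs2⟩ := covers_of_sum S hSin m hsum
  have hcov : Covers M (cover (M - S) + m) := by
    refine ⟨P1 + P2, by simp [hc1, hc2], ?_, ?_⟩
    · rw [Multiset.sum_add]
      calc P1.sum + P2.sum ≤ (M - S) + S := add_le_add hl1 hl2
      _ = M := tsub_add_cancel_of_le hS
    · intro B hB
      rcases Multiset.mem_add.1 hB with h | h
      exacts [hs1 B h, hs2 B h]
  exact le_csSup (covers_bdd M) hcov
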